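/- Let r, B, C > 0, D ≥ 0, n ≥ 1 with rBn - D ≠ 0 and rB(n+1) - D ≠ 0, and fix Δ > 0 and h > 0. Define g_{(n,h,Δ)}(s) = φ_{n+1}(φ_n(h,s), Δ - s) for s ∈ [0, Δ], where φ_m is the logistic flow y' = y(rBm - D - Cy). Then d/ds g_{(n,h,Δ)}(s) = -rB · g_{(n,h,Δ)}(s) / (1 + (φ_n(h,s)·C/(rB(n+1)-D))·(e^{(rB(n+1)-D)(Δ-s)} - 1)) < 0 for all s ∈ (0, Δ); in particular g_{(n,h,Δ)} is strictly decreasing on [0, Δ]. -/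

import Mathlib

noncomputable def phi (r B C D : ℝ) (n : ℕ) (h t : ℝ) : ℝ :=
  h * Real.exp (t * (r * B * n - D)) /
    (1 + h * C / (r * B * n - D) * (Real.exp (t * (r * B * n - D)) - 1))

/-- Predator density at time `Δ` if the single prey birth occurred at time `s`. -/
noncomputable def gfun (r B C D : ℝ) (n : ℕ) (h Δ s : ℝ) : ℝ :=
  phi r B C D (n + 1) (phi r B C D n h s) (Δ - s)


noncomputable def Wfun (a rB h C Δ s : ℝ) : ℝ :=
  1 + h * C / a * (Real.exp (s * a) - 1)
    + h * C / (a + rB) * Real.exp (s * a) * (Real.exp ((Δ - s) * (a + rB)) - 1)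

noncomputable def Gfun (a rB h C Δ s : ℝ) : ℝ :=
  h * Real.exp (s * a) * Real.exp ((Δ - s) * (a + rB)) / Wfun a rB h C Δ s

lemma denom_pos' (a h C t : ℝ) (hh : 0 < h) (hC : 0 < C) (ha : a ≠ 0) (ht : 0 ≤ t) :
    0 < 1 + h * C / a * (Real.exp (t * a) - 1) := by
  have h1 : 0 ≤ h * C / a * (Real.exp (t * a) - 1) := by
    rcases ha.lt_or_gt with hlt | hgt
    · have h3 : Real.exp (t * a) ≤ 1 := Real.exp_le_one_iff.mpr (mul_nonpos_of_nonneg_of_nonpos ht hlt.le)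
      have h2 : h * C / a ≤ 0 := le_of_lt (div_neg_of_pos_of_neg (mul_pos hh hC) hlt)
      nlinarith
    · have h3 : 1 ≤ Real.exp (t * a) := Real.one_le_exp (mul_nonneg ht hgt.le)
      have h2 : 0 ≤ h * C / a := le_of_lt (div_pos (mul_pos hh hC) hgt)
      nlinarith
  linarith

-- W = Da * Q factorization
lemma W_factor (a rB h C Δ s : ℝ) (ha : a ≠ 0) (hb : a + rB ≠ 0)
    (hDa : 1 + h * C / a * (Real.exp (s * a) - 1) ≠ 0) :
    Wfun a rB h C Δ s = (1 + h * C / a * (Real.exp (s * a) - 1)) *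
      (1 + (h * Real.exp (s * a) / (1 + h * C / a * (Real.exp (s * a) - 1))) * C / (a + rB)
        * (Real.exp ((Δ - s) * (a + rB)) - 1)) := by
  unfold Wfun
  set E1 := Real.exp (s * a) with hE1
  set E2 := Real.exp ((Δ - s) * (a + rB)) with hE2
  have h2 : a + h * C * (E1 - 1) ≠ 0 := by
    intro hcon
    apply hDa
    field_simp
    linarith
  rw [mul_add, mul_one]
  have h3 : (1 + h * C / a * (E1 - 1)) * (h * E1 / (1 + h * C / a * (E1 - 1)) * C / (a + rB) * (E2 - 1))
      = h * C / (a + rB) * E1 * (E2 - 1) := by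
    rw [mul_comm]
    field_simp
  rw [h3]

lemma W_pos (a rB h C Δ s : ℝ) (hh : 0 < h) (hC : 0 < C) (ha : a ≠ 0) (hb : a + rB ≠ 0)
    (hs : 0 ≤ s) (hsΔ : s ≤ Δ) : 0 < Wfun a rB h C Δ s := by
  have hDa := denom_pos' a h C s hh hC ha hs
  have hP : 0 < h * Real.exp (s * a) / (1 + h * C / a * (Real.exp (s * a) - 1)) :=
    div_pos (mul_pos hh (Real.exp_pos _)) hDa
  have hQ := denom_pos' (a + rB) (h * Real.exp (s * a) / (1 + h * C / a * (Real.exp (s * a) - 1)))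
    C (Δ - s) hP hC hb (by linarith)
  rw [W_factor a rB h C Δ s ha hb hDa.ne']
  exact mul_pos hDa hQ

lemma G_hasDeriv (a rB h C Δ s : ℝ) (hW : Wfun a rB h C Δ s ≠ 0) (ha : a ≠ 0) (hb : a + rB ≠ 0) :
    HasDerivAt (fun u => Gfun a rB h C Δ u)
      (-rB * (h * Real.exp (s * a) * Real.exp ((Δ - s) * (a + rB)))
        * (1 + h * C / a * (Real.exp (s * a) - 1)) / (Wfun a rB h C Δ s) ^ 2) s := by
  have h1 : HasDerivAt (fun u : ℝ => u * a) a s := by simpa using (hasDerivAt_id s).mul_const a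
  have h2 : HasDerivAt (fun u : ℝ => (Δ - u) * (a + rB)) (-(a + rB)) s := by
    simpa using ((hasDerivAt_const s Δ).sub (hasDerivAt_id s)).mul_const (a + rB)
  have e1 := h1.exp
  have e2 := h2.exp
  have hN : HasDerivAt (fun u => h * Real.exp (u * a) * Real.exp ((Δ - u) * (a + rB)))
      (h * (Real.exp (s * a) * a) * Real.exp ((Δ - s) * (a + rB))
        + h * Real.exp (s * a) * (Real.exp ((Δ - s) * (a + rB)) * -(a + rB))) s :=
    (e1.const_mul h).mul e2
  have hWd : HasDerivAt (fun u => Wfun a rB h C Δ u)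
      ((h * C / a) * (Real.exp (s * a) * a)
        + ((h * C / (a + rB)) * (Real.exp (s * a) * a) * (Real.exp ((Δ - s) * (a + rB)) - 1)
          + (h * C / (a + rB)) * Real.exp (s * a) * (Real.exp ((Δ - s) * (a + rB)) * -(a + rB)))) s := by
    have w1 : HasDerivAt (fun u => 1 + h * C / a * (Real.exp (u * a) - 1))
        ((h * C / a) * (Real.exp (s * a) * a)) s := by
      exact ((e1.sub_const 1).const_mul (h * C / a)).const_add 1
    have w2 : HasDerivAt
        (fun u => h * C / (a + rB) * Real.exp (u * a) * (Real.exp ((Δ - u) * (a + rB)) - 1))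
        ((h * C / (a + rB)) * (Real.exp (s * a) * a) * (Real.exp ((Δ - s) * (a + rB)) - 1)
          + (h * C / (a + rB)) * Real.exp (s * a) * (Real.exp ((Δ - s) * (a + rB)) * -(a + rB))) s :=
      (e1.const_mul (h * C / (a + rB))).mul (e2.sub_const 1)
    exact w1.add w2
  have hdiv := hN.div hWd hW
  refine hdiv.congr_deriv ?_
  rw [div_eq_div_iff (pow_ne_zero 2 hW) (pow_ne_zero 2 hW)]
  unfold Wfun
  set E1 := Real.exp (s * a) with hE1
  set E2 := Real.exp ((Δ - s) * (a + rB)) with hE2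
  field_simp
  ring

lemma G_val_neg (a rB h C Δ s : ℝ) (hrB : 0 < rB) (hh : 0 < h) (hC : 0 < C)
    (ha : a ≠ 0) (hb : a + rB ≠ 0) (hs : 0 ≤ s) (hsΔ : s ≤ Δ) :
    -rB * (h * Real.exp (s * a) * Real.exp ((Δ - s) * (a + rB)))
      * (1 + h * C / a * (Real.exp (s * a) - 1)) / (Wfun a rB h C Δ s) ^ 2 < 0 := by
  have hDa := denom_pos' a h C s hh hC ha hs
  have hW := W_pos a rB h C Δ s hh hC ha hb hs hsΔ
  apply div_neg_of_neg_of_pos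
  · have hN : 0 < h * Real.exp (s * a) * Real.exp ((Δ - s) * (a + rB)) :=
      mul_pos (mul_pos hh (Real.exp_pos _)) (Real.exp_pos _)
    nlinarith [mul_pos (mul_pos hrB hN) hDa]
  · positivity

lemma G_strictAnti (a rB h C Δ : ℝ) (hrB : 0 < rB) (hh : 0 < h) (hC : 0 < C)
    (hΔ : 0 < Δ) (ha : a ≠ 0) (hb : a + rB ≠ 0) :
    StrictAntiOn (fun s => Gfun a rB h C Δ s) (Set.Icc 0 Δ) := by
  apply strictAntiOn_of_deriv_neg (convex_Icc 0 Δ)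
  · apply ContinuousOn.div
    · fun_prop
    · unfold Wfun; fun_prop
    · intro x hx
      exact (W_pos a rB h C Δ x hh hC ha hb hx.1 hx.2).ne'
  · intro x hx
    rw [interior_Icc] at hx
    have hW := (W_pos a rB h C Δ x hh hC ha hb hx.1.le hx.2.le).ne'
    rw [(G_hasDeriv a rB h C Δ x hW ha hb).deriv]
    exact G_val_neg a rB h C Δ x hrB hh hC ha hb hx.1.le hx.2.le

theorem stmt_12 (r B C D : ℝ) (hr : 0 < r) (hB : 0 < B) (hC : 0 < C) (hD : 0 ≤ D)
    (n : ℕ) (hn : 1 ≤ n) (ha : r * B * n - D ≠ 0) (ha' : r * B * (n + 1 : ℕ) - D ≠ 0)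
    (Δ h : ℝ) (hΔ : 0 < Δ) (hh : 0 < h) :
    (∀ s ∈ Set.Ioo (0 : ℝ) Δ,
      HasDerivAt (fun u => gfun r B C D n h Δ u)
        (-(r * B) * gfun r B C D n h Δ s /
          (1 + phi r B C D n h s * C / (r * B * (n + 1 : ℕ) - D) *
            (Real.exp ((r * B * (n + 1 : ℕ) - D) * (Δ - s)) - 1))) s ∧
      -(r * B) * gfun r B C D n h Δ s /
          (1 + phi r B C D n h s * C / (r * B * (n + 1 : ℕ) - D) *
            (Real.exp ((r * B * (n + 1 : ℕ) - D) * (Δ - s)) - 1)) < 0) ∧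
    StrictAntiOn (fun u => gfun r B C D n h Δ u) (Set.Icc 0 Δ) := by
  have hb' : r * B * ((n + 1 : ℕ) : ℝ) - D = (r * B * (n : ℝ) - D) + r * B := by
    push_cast; ring
  have ha2 : (r * B * (n : ℝ) - D) ≠ 0 := ha
  have hb2 : (r * B * (n : ℝ) - D) + r * B ≠ 0 := hb' ▸ ha'
  have hrB : 0 < r * B := mul_pos hr hB
  have g_eq : ∀ s ∈ Set.Icc (0 : ℝ) Δ, gfun r B C D n h Δ s
      = Gfun (r * B * (n : ℝ) - D) (r * B) h C Δ s := by
    intro s hs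
    have hDa := denom_pos' (r * B * (n : ℝ) - D) h C s hh hC ha2 hs.1
    rw [Gfun, W_factor _ _ _ _ _ _ ha2 hb2 hDa.ne']
    unfold gfun phi
    rw [hb', div_mul_eq_mul_div, div_div]
  constructor
  · intro s hs
    obtain ⟨hs0, hsΔ⟩ := hs
    have hIcc : s ∈ Set.Icc (0 : ℝ) Δ := ⟨hs0.le, hsΔ.le⟩
    have hDa := denom_pos' (r * B * (n : ℝ) - D) h C s hh hC ha2 hs0.le
    have hW := W_pos (r * B * (n : ℝ) - D) (r * B) h C Δ s hh hC ha2 hb2 hs0.le hsΔ.le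
    have hGd := G_hasDeriv (r * B * (n : ℝ) - D) (r * B) h C Δ s hW.ne' ha2 hb2
    have hQeq : (1 + (h * Real.exp (s * (r * B * (n : ℝ) - D)) /
          (1 + h * C / (r * B * (n : ℝ) - D) * (Real.exp (s * (r * B * (n : ℝ) - D)) - 1))) * C /
          ((r * B * (n : ℝ) - D) + r * B) *
          (Real.exp ((Δ - s) * ((r * B * (n : ℝ) - D) + r * B)) - 1))
        = Wfun (r * B * (n : ℝ) - D) (r * B) h C Δ s /
          (1 + h * C / (r * B * (n : ℝ) - D) * (Real.exp (s * (r * B * (n : ℝ) - D)) - 1)) := by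
      rw [eq_div_iff hDa.ne', mul_comm]
      exact (W_factor _ _ _ _ _ _ ha2 hb2 hDa.ne').symm
    have hval : -(r * B) * gfun r B C D n h Δ s /
          (1 + phi r B C D n h s * C / (r * B * ((n + 1 : ℕ) : ℝ) - D) *
            (Real.exp ((r * B * ((n + 1 : ℕ) : ℝ) - D) * (Δ - s)) - 1))
        = -(r * B) * (h * Real.exp (s * (r * B * (n : ℝ) - D)) *
              Real.exp ((Δ - s) * ((r * B * (n : ℝ) - D) + r * B)))
            * (1 + h * C / (r * B * (n : ℝ) - D) * (Real.exp (s * (r * B * (n : ℝ) - D)) - 1))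
            / (Wfun (r * B * (n : ℝ) - D) (r * B) h C Δ s) ^ 2 := by
      rw [g_eq s hIcc, hb', mul_comm ((r * B * (n : ℝ) - D) + r * B) (Δ - s)]
      unfold phi
      rw [hQeq, Gfun]
      set E1 := Real.exp (s * (r * B * (n : ℝ) - D))
      set E2 := Real.exp ((Δ - s) * ((r * B * (n : ℝ) - D) + r * B))
      set d := 1 + h * C / (r * B * (n : ℝ) - D) * (E1 - 1) with hd
      set W := Wfun (r * B * (n : ℝ) - D) (r * B) h C Δ s with hWdef
      clear_value d W
      field_simp
    constructor
    · rw [hval]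
      refine hGd.congr_of_eventuallyEq ?_
      filter_upwards [Ioo_mem_nhds hs0 hsΔ] with x hx
      exact g_eq x ⟨hx.1.le, hx.2.le⟩
    · rw [hval]
      exact G_val_neg _ _ _ _ _ _ hrB hh hC ha2 hb2 hs0.le hsΔ.le
  · intro x hx y hy hxy
    have := G_strictAnti (r * B * (n : ℝ) - D) (r * B) h C Δ hrB hh hC hΔ ha2 hb2 hx hy hxy
    simp only [g_eq x hx, g_eq y hy]
    exact this
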